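/- Let p ≥ 3 be an integer. For each q = 1, …, p let m_q ≥ 1 and let α_{q,1}, …, α_{q,m_q} be nonzero complex numbers satisfying ∑_{i=1}^{m_q} α_{q,i} = 1 and ∑_{i=1}^{m_q} α_{q,i}^{q+1} = 0. Then there exist indices i_1 ∈ {1,…,m_1}, …, i_p ∈ {1,…,m_p} such that Re(∏_{q=1}^{p} α_{q,i_q}) < 0. -/

import Mathlib

open Complex Finset Real

/-- Spread lemma: if nonzero complex numbers have vanishing sum of `n`-th powers,
two of them have principal arguments at least `π / n` apart. -/
lemma spread_aux {M : ℕ} [NeZero M] (n : ℕ) (hn : 0 < n) (z : Fin M → ℂ)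
    (hz : ∀ i, z i ≠ 0) (hsum : ∑ i, z i ^ n = 0) :
    ∃ i j, π / n ≤ arg (z i) - arg (z j) := by
  by_contra hcontra
  push_neg at hcontra
  obtain ⟨i0, -, hi0⟩ := Finset.exists_max_image (univ : Finset (Fin M))
    (fun i => arg (z i)) univ_nonempty
  obtain ⟨j0, -, hj0⟩ := Finset.exists_min_image (univ : Finset (Fin M))
    (fun i => arg (z i)) univ_nonempty
  have hnR : (0:ℝ) < (n:ℝ) := by exact_mod_cast hn
  set c : ℝ := (arg (z i0) + arg (z j0)) / 2 with hc
  have hlt : (n:ℝ) * (arg (z i0) - arg (z j0)) < π := by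
    have := hcontra i0 j0
    rw [lt_div_iff₀ hnR] at this
    linarith [this]
  set u : ℂ := Complex.exp ((-(n * c) : ℝ) * Complex.I) with hu
  have key : ∀ k, 0 < (u * z k ^ n).re := by
    intro k
    have hzk : z k ^ n = ((‖z k‖ ^ n : ℝ) : ℂ) *
        Complex.exp (((n : ℝ) * arg (z k)) * Complex.I) := by
      conv_lhs => rw [← Complex.norm_mul_exp_arg_mul_I (z k)]
      rw [mul_pow, ← Complex.exp_nat_mul]
      push_cast
      ring_nf
    have hexp : u * Complex.exp (((n : ℝ) * arg (z k)) * Complex.I)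
        = Complex.exp ((((n:ℝ) * arg (z k) - n * c) : ℝ) * Complex.I) := by
      rw [hu, ← Complex.exp_add]
      congr 1
      push_cast
      ring
    have hre : (u * z k ^ n).re = ‖z k‖ ^ n *
        Real.cos ((n:ℝ) * arg (z k) - n * c) := by
      rw [hzk, show u * (((‖z k‖ ^ n : ℝ) : ℂ) *
          Complex.exp (((n : ℝ) * arg (z k)) * Complex.I))
        = ((‖z k‖ ^ n : ℝ) : ℂ) *
          (u * Complex.exp (((n : ℝ) * arg (z k)) * Complex.I)) by ring, hexp,
        Complex.re_ofReal_mul, Complex.exp_ofReal_mul_I_re]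
    rw [hre]
    have habs : 0 < ‖z k‖ ^ n := pow_pos (norm_pos_iff.mpr (hz k)) n
    have h1 : arg (z k) ≤ arg (z i0) := hi0 k (mem_univ k)
    have h2 : arg (z j0) ≤ arg (z k) := hj0 k (mem_univ k)
    have hcos : 0 < Real.cos ((n:ℝ) * arg (z k) - n * c) := by
      apply Real.cos_pos_of_mem_Ioo
      constructor
      · rw [hc]
        nlinarith [hlt, mul_le_mul_of_nonneg_left h2 (le_of_lt hnR)]
      · rw [hc]
        nlinarith [hlt, mul_le_mul_of_nonneg_left h1 (le_of_lt hnR)]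
    positivity
  have hpos : 0 < ∑ k, (u * z k ^ n).re :=
    Finset.sum_pos (fun k _ => key k) univ_nonempty
  have hzero : ∑ k, (u * z k ^ n).re = 0 := by
    rw [← Complex.re_sum, ← Finset.mul_sum, hsum, mul_zero, Complex.zero_re]
  linarith

theorem stmt_6 (p : ℕ) (hp : 3 ≤ p) (m : Fin p → ℕ) (hm : ∀ q, 1 ≤ m q)
    (α : (q : Fin p) → Fin (m q) → ℂ)
    (hα0 : ∀ q i, α q i ≠ 0)
    (hcons : ∀ q, ∑ i, α q i = 1)
    (horder : ∀ q : Fin p, ∑ i, (α q i) ^ (q.val + 2) = 0) :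
    ∃ i : (q : Fin p) → Fin (m q), (∏ q, α q (i q)).re < 0 := by
  by_contra hcon
  push_neg at hcon
  haveI : ∀ q : Fin p, NeZero (m q) := fun q => ⟨by have := hm q; omega⟩
  set P : ((q : Fin p) → Fin (m q)) → ℂ := fun J => ∏ q, α q (J q) with hPdef
  have hPne : ∀ J, P J ≠ 0 := fun J =>
    Finset.prod_ne_zero_iff.2 (fun q _ => hα0 q (J q))
  have hPre : ∀ J, 0 ≤ (P J).re := hcon
  have hParg : ∀ J, |arg (P J)| ≤ π / 2 := fun J =>
    Complex.abs_arg_le_pi_div_two_iff.2 (hPre J)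
  -- there exists a choice with strictly positive real part
  have hsum1 : ∑ J : (q : Fin p) → Fin (m q), P J = 1 := by
    rw [hPdef, ← Fintype.prod_sum (fun q i => α q i)]
    simp [hcons]
  have hex : ∃ J, 0 < (P J).re := by
    by_contra hne
    push_neg at hne
    have hall : ∀ J, (P J).re = 0 := fun J => le_antisymm (hne J) (hPre J)
    have h1 : (∑ J : (q : Fin p) → Fin (m q), P J).re = 1 := by rw [hsum1]; rfl
    rw [Complex.re_sum] at h1
    simp only [hall, Finset.sum_const_zero] at h1
    norm_num at h1
  obtain ⟨Istar, hIstar⟩ := hex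
  set τ : ℝ := arg (P Istar) with hτdef
  have hτ : |τ| < π / 2 :=
    Complex.abs_arg_lt_pi_div_two_iff.mpr (Or.inl hIstar)
  set w : (q : Fin p) → ℂ := fun q => ∏ x ∈ univ.erase q, α x (Istar x) with hwdef
  have hw : ∀ q, w q ≠ 0 := fun q =>
    Finset.prod_ne_zero_iff.2 (fun x _ => hα0 x (Istar x))
  -- product after updating one coordinate
  have keyId : ∀ (J : (q : Fin p) → Fin (m q)) (q : Fin p) (i : Fin (m q)),
      P (Function.update J q i) = α q i * ∏ x ∈ univ.erase q, α x (J x) := by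
    intro J q i
    rw [hPdef]
    simp only
    rw [← Finset.mul_prod_erase univ (fun x => α x (Function.update J q i x)) (mem_univ q)]
    congr 1
    · simp
    · exact Finset.prod_congr rfl
        (fun x hx => by rw [Function.update_of_ne (Finset.ne_of_mem_erase hx)])
  have hPJ : ∀ (J : (q : Fin p) → Fin (m q)) (q : Fin p),
      P J = α q (J q) * ∏ x ∈ univ.erase q, α x (J x) := fun J q =>
    (Finset.mul_prod_erase univ (fun x => α x (J x)) (mem_univ q)).symm
  have hup : ∀ (q : Fin p) (i : Fin (m q)),
      P (Function.update Istar q i) = α q i * w q := fun q i => keyId Istar q i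
  set h : (q : Fin p) → Fin (m q) → ℝ := fun q i => arg (α q i * w q) with hhdef
  have hhle : ∀ q i, |h q i| ≤ π / 2 := by
    intro q i
    have : α q i * w q = P (Function.update Istar q i) := (hup q i).symm
    rw [hhdef]; simp only
    rw [this]
    exact hParg _
  have hhτ : ∀ q, h q (Istar q) = τ := by
    intro q
    have : α q (Istar q) * w q = P Istar := by
      rw [← hup q (Istar q), Function.update_eq_self]
    rw [hhdef]; simp only
    rw [this]
  -- the key step lemma
  have hstep : ∀ (J : (q : Fin p) → Fin (m q)) (q : Fin p) (i : Fin (m q)),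
      J q = Istar q →
      arg (P (Function.update J q i)) = arg (P J) + (h q i - τ) := by
    intro J q i hJq
    have hid : P (Function.update J q i) * (α q (J q) * w q)
        = P J * (α q i * w q) := by
      rw [keyId J q i, hPJ J q]; ring
    have hangle : (arg (P (Function.update J q i)) : Real.Angle)
          + (arg (α q (J q) * w q) : Real.Angle)
        = (arg (P J) : Real.Angle) + (arg (α q i * w q) : Real.Angle) := by
      rw [← Complex.arg_mul_coe_angle (hPne _) (mul_ne_zero (hα0 _ _) (hw q)),
        ← Complex.arg_mul_coe_angle (hPne _) (mul_ne_zero (hα0 _ _) (hw q)), hid]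
    have hangle' : ((arg (P (Function.update J q i)) + arg (α q (J q) * w q) : ℝ)
        : Real.Angle) = ((arg (P J) + arg (α q i * w q) : ℝ) : Real.Angle) := by
      rw [Real.Angle.coe_add, Real.Angle.coe_add]
      exact hangle
    obtain ⟨k, hk⟩ := Real.Angle.angle_eq_iff_two_pi_dvd_sub.mp hangle'
    have e1 : arg (α q (J q) * w q) = τ := by
      rw [hJq]
      exact hhτ q
    have e2 : arg (α q i * w q) = h q i := rfl
    rw [e1, e2] at hk
    have b1 : |arg (P (Function.update J q i))| ≤ π / 2 := hParg _
    have b2 : |arg (P J)| ≤ π / 2 := hParg _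
    have b3 : |h q i| ≤ π / 2 := hhle q i
    have hπ : 0 < π := Real.pi_pos
    have habs1 := abs_le.mp b1
    have habs2 := abs_le.mp b2
    have habs3 := abs_le.mp b3
    have habsτ := abs_lt.mp hτ
    have hk0 : k = 0 := by
      rcases lt_trichotomy k 0 with hkneg | hk0 | hkpos
      · have hk1 : (k : ℝ) ≤ -1 := by exact_mod_cast (by omega : k ≤ -1)
        have hmul : 2 * π * (k : ℝ) ≤ 2 * π * (-1) :=
          mul_le_mul_of_nonneg_left hk1 (by positivity)
        linarith
      · exact hk0
      · have hk1 : (1 : ℝ) ≤ (k : ℝ) := by exact_mod_cast (by omega : 1 ≤ k)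
        have hmul : 2 * π * 1 ≤ 2 * π * (k : ℝ) :=
          mul_le_mul_of_nonneg_left hk1 (by positivity)
        linarith
    rw [hk0] at hk
    push_cast at hk
    linarith
  -- the three relevant levels
  have h0p : (0 : ℕ) < p := by omega
  have h1p : (1 : ℕ) < p := by omega
  have h2p : (2 : ℕ) < p := by omega
  set q0 : Fin p := ⟨0, h0p⟩ with hq0
  set q1 : Fin p := ⟨1, h1p⟩ with hq1
  set q2 : Fin p := ⟨2, h2p⟩ with hq2
  have hne01 : q1 ≠ q0 := by simp [hq0, hq1, Fin.ext_iff]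
  have hne02 : q2 ≠ q0 := by simp [hq0, hq2, Fin.ext_iff]
  have hne12 : q2 ≠ q1 := by simp [hq1, hq2, Fin.ext_iff]
  -- apply the spread lemma at each level
  have spread : ∀ q : Fin p, ∃ i j : Fin (m q),
      π / ((q.val + 2 : ℕ) : ℝ) ≤ h q i - h q j := by
    intro q
    have hzsum : ∑ i, (α q i * w q) ^ (q.val + 2) = 0 := by
      simp only [mul_pow, ← Finset.sum_mul, horder q, zero_mul]
    exact spread_aux (q.val + 2) (by omega) (fun i => α q i * w q)
      (fun i => mul_ne_zero (hα0 q i) (hw q)) hzsum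
  obtain ⟨a0, b0, hs0⟩ := spread q0
  obtain ⟨a1, b1', hs1⟩ := spread q1
  obtain ⟨a2, b2', hs2⟩ := spread q2
  have hs0' : π / 2 ≤ h q0 a0 - h q0 b0 := by
    have : ((q0.val + 2 : ℕ) : ℝ) = 2 := by norm_num [hq0]
    rwa [this] at hs0
  have hs1' : π / 3 ≤ h q1 a1 - h q1 b1' := by
    have : ((q1.val + 2 : ℕ) : ℝ) = 3 := by norm_num [hq1]
    rwa [this] at hs1
  have hs2' : π / 4 ≤ h q2 a2 - h q2 b2' := by
    have : ((q2.val + 2 : ℕ) : ℝ) = 4 := by norm_num [hq2]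
    rwa [this] at hs2
  -- build the two paths
  have path : ∀ (i0 : Fin (m q0)) (i1 : Fin (m q1)) (i2 : Fin (m q2)),
      arg (P (Function.update (Function.update (Function.update Istar q0 i0) q1 i1) q2 i2))
        = h q0 i0 + h q1 i1 + h q2 i2 - 2 * τ := by
    intro i0 i1 i2
    have s1 : arg (P (Function.update Istar q0 i0)) = h q0 i0 := by
      rw [hup q0 i0]
    have s2 : arg (P (Function.update (Function.update Istar q0 i0) q1 i1))
        = h q0 i0 + (h q1 i1 - τ) := by
      rw [hstep (Function.update Istar q0 i0) q1 i1
        (Function.update_of_ne hne01 _ _), s1]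
    have s3 : arg (P (Function.update (Function.update
          (Function.update Istar q0 i0) q1 i1) q2 i2))
        = (h q0 i0 + (h q1 i1 - τ)) + (h q2 i2 - τ) := by
      rw [hstep (Function.update (Function.update Istar q0 i0) q1 i1) q2 i2
        (by rw [Function.update_of_ne hne12, Function.update_of_ne hne02]), s2]
    rw [s3]; ring
  have Hplus := path a0 a1 a2
  have Hminus := path b0 b1' b2'
  have bplus := abs_le.mp (hParg (Function.update (Function.update
    (Function.update Istar q0 a0) q1 a1) q2 a2))
  have bminus := abs_le.mp (hParg (Function.update (Function.update
    (Function.update Istar q0 b0) q1 b1') q2 b2'))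
  rw [Hplus] at bplus
  rw [Hminus] at bminus
  have hπ : 0 < π := Real.pi_pos
  linarith
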